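/- Let l be a positive integer. Then there exists a finite set 𝒩'' of positive integers, each divisible by l, depending only on l, satisfying the following: for any positive integer k and any sequences a₁,…,a_k and b₁,…,b_k of non-negative real numbers with Σ_{i=1}^{k} a_i ≤ 1 and Σ_{i=1}^{k} b_i ≤ 1, there exist n ∈ 𝒩'', an integer k' ≥ k, and non-negative real numbers a₁⁺,…,a_{k'}⁺ and b₁⁺,…,b_{k'}⁺ such that (1) Σ_{i=1}^{k'} a_i⁺ = Σ_{i=1}^{k'} b_i⁺ = 1, and (2) n·a_i⁺ ≥ n·⌊a_i⌋ + ⌊(n+1){a_i}⌋ and n·b_i⁺ ≥ n·⌊b_i⌋ + ⌊(n+1){b_i}⌋ for every 1 ≤ i ≤ k. -/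

import Mathlib

open scoped BigOperators

/-- If some `x i = 1` essentially (x i ≥ 1), the sum is exactly `n`. -/
lemma stmt8_deg (k n : ℕ) (x : ℕ → ℝ) (hx : ∀ i, 0 ≤ x i)
    (hs : (∑ i ∈ Finset.range k, x i) ≤ 1) (i0 : ℕ) (hi0 : i0 ∈ Finset.range k)
    (h1 : 1 ≤ x i0) :
    (∑ i ∈ Finset.range k, ((n : ℤ) * ⌊x i⌋ + ⌊((n : ℝ) + 1) * Int.fract (x i)⌋)) ≤ n := by
  have hxle : x i0 ≤ ∑ i ∈ Finset.range k, x i :=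
    Finset.single_le_sum (fun i _ => hx i) hi0
  have hx1 : x i0 = 1 := le_antisymm (hxle.trans hs) h1
  have hsplit : x i0 + ∑ i ∈ (Finset.range k).erase i0, x i = ∑ i ∈ Finset.range k, x i :=
    Finset.add_sum_erase _ _ hi0
  have hzero : ∀ j ∈ (Finset.range k).erase i0, x j = 0 := by
    intro j hj
    have h0 : ∑ i ∈ (Finset.range k).erase i0, x i ≤ 0 := by
      have := hs
      rw [← hsplit, hx1] at this
      linarith
    have h1' : x j ≤ ∑ i ∈ (Finset.range k).erase i0, x i :=
      Finset.single_le_sum (fun i _ => hx i) hj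
    exact le_antisymm (h1'.trans h0) (hx j)
  have : (∑ i ∈ Finset.range k, ((n : ℤ) * ⌊x i⌋ + ⌊((n : ℝ) + 1) * Int.fract (x i)⌋)) =
      (n : ℤ) * ⌊x i0⌋ + ⌊((n : ℝ) + 1) * Int.fract (x i0)⌋ := by
    apply Finset.sum_eq_single_of_mem i0 hi0
    intro j hj hji
    have hj0 : x j = 0 := hzero j (Finset.mem_erase.mpr ⟨hji, hj⟩)
    simp [hj0, Int.fract_zero]
  rw [this, hx1]
  simp [Int.fract_one]

/-- Key rigidity lemma: if the sum fails for `n`, it succeeds for any coprime `n'`. -/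
lemma stmt8_key (k : ℕ) (x : ℕ → ℝ) (hx : ∀ i, 0 ≤ x i)
    (hs : (∑ i ∈ Finset.range k, x i) ≤ 1) (n n' : ℕ)
    (hcop : Nat.Coprime (n + 1) (n' + 1))
    (hbad : ¬ (∑ i ∈ Finset.range k, ((n : ℤ) * ⌊x i⌋ + ⌊((n : ℝ) + 1) * Int.fract (x i)⌋)) ≤ n) :
    (∑ i ∈ Finset.range k, ((n' : ℤ) * ⌊x i⌋ + ⌊((n' : ℝ) + 1) * Int.fract (x i)⌋)) ≤ n' := by
  -- all x i < 1
  have hlt : ∀ i ∈ Finset.range k, x i < 1 := by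
    intro i hi
    by_contra h
    exact hbad (stmt8_deg k n x hx hs i hi (le_of_not_gt h))
  have hfl : ∀ i ∈ Finset.range k, ⌊x i⌋ = 0 := by
    intro i hi
    exact Int.floor_eq_zero_iff.mpr ⟨hx i, hlt i hi⟩
  have hfr : ∀ i ∈ Finset.range k, Int.fract (x i) = x i := by
    intro i hi
    rw [Int.fract, hfl i hi]; simp
  have hrw : ∀ (m : ℕ),
      (∑ i ∈ Finset.range k, ((m : ℤ) * ⌊x i⌋ + ⌊((m : ℝ) + 1) * Int.fract (x i)⌋)) =
      ∑ i ∈ Finset.range k, ⌊((m : ℝ) + 1) * x i⌋ := by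
    intro m
    apply Finset.sum_congr rfl
    intro i hi
    rw [hfl i hi, hfr i hi]; ring_nf
  rw [hrw] at hbad ⊢
  set c : ℕ → ℤ := fun i => ⌊((n : ℝ) + 1) * x i⌋ with hc
  -- upper bound on the c-sum
  have hcub : ((∑ i ∈ Finset.range k, c i : ℤ) : ℝ) ≤ (n : ℝ) + 1 := by
    push_cast
    calc (∑ i ∈ Finset.range k, ((c i : ℝ)))
        ≤ ∑ i ∈ Finset.range k, ((n : ℝ) + 1) * x i :=
          Finset.sum_le_sum (fun i _ => Int.floor_le _)
      _ = ((n : ℝ) + 1) * ∑ i ∈ Finset.range k, x i := by rw [Finset.mul_sum]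
      _ ≤ ((n : ℝ) + 1) * 1 := by
          apply mul_le_mul_of_nonneg_left hs; positivity
      _ = (n : ℝ) + 1 := by ring
  have hS : (∑ i ∈ Finset.range k, c i) = (n : ℤ) + 1 := by
    have h1 : (∑ i ∈ Finset.range k, c i) ≤ (n : ℤ) + 1 := by exact_mod_cast hcub
    have h2 : (n : ℤ) < ∑ i ∈ Finset.range k, c i := not_le.mp hbad
    omega
  -- each floor is exact: (c i : ℝ) = (n+1) * x i
  have heq : ∀ i ∈ Finset.range k, ((c i : ℝ)) = ((n : ℝ) + 1) * x i := by
    have hsum0 : ∑ i ∈ Finset.range k, (((n : ℝ) + 1) * x i - (c i : ℝ)) = 0 := by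
      apply le_antisymm
      · rw [Finset.sum_sub_distrib]
        have : ((∑ i ∈ Finset.range k, c i : ℤ) : ℝ) = (n : ℝ) + 1 := by
          rw [hS]; push_cast; ring
        push_cast at this ⊢
        rw [this, ← Finset.mul_sum]
        nlinarith [hs]
      · apply Finset.sum_nonneg
        intro i _
        have := Int.floor_le (((n : ℝ) + 1) * x i)
        simp only [hc]; linarith
    intro i hi
    have := (Finset.sum_eq_zero_iff_of_nonneg (fun j _ => by
      have := Int.floor_le (((n : ℝ) + 1) * x j)
      simp only [hc]; linarith)).mp hsum0 i hi
    linarith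
  have hc0 : ∀ i ∈ Finset.range k, 0 ≤ c i := by
    intro i hi
    apply Int.floor_nonneg.mpr
    have := hx i
    positivity
  have hclt : ∀ i ∈ Finset.range k, c i ≤ (n : ℤ) := by
    intro i hi
    have h1 : ((c i : ℝ)) < (n : ℝ) + 1 := by
      rw [heq i hi]
      have := hlt i hi
      nlinarith
    have : c i < (n : ℤ) + 1 := by exact_mod_cast h1
    omega
  -- find positive entry
  have hex : ∃ i0 ∈ Finset.range k, 0 < c i0 := by
    by_contra h
    push_neg at h
    have : (∑ i ∈ Finset.range k, c i) ≤ 0 :=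
      Finset.sum_nonpos (fun i hi => h i hi)
    omega
  obtain ⟨i0, hi0, hci0⟩ := hex
  -- bound the target floors
  set d : ℕ → ℤ := fun i => ⌊((n' : ℝ) + 1) * x i⌋ with hd
  have hdb : ∀ i ∈ Finset.range k, ((n : ℤ) + 1) * d i ≤ ((n' : ℤ) + 1) * c i := by
    intro i hi
    have h1 : ((d i : ℝ)) ≤ ((n' : ℝ) + 1) * x i := Int.floor_le _
    have h2 : (((n : ℤ) + 1) * d i : ℝ) ≤ (((n' : ℤ) + 1) * c i : ℝ) := by
      push_cast
      rw [heq i hi]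
      nlinarith [hx i]
    exact_mod_cast h2
  have hstrict : ((n : ℤ) + 1) * d i0 ≤ ((n' : ℤ) + 1) * c i0 - 1 := by
    have hne : ((n : ℤ) + 1) * d i0 ≠ ((n' : ℤ) + 1) * c i0 := by
      intro h
      have hdvd : ((n : ℤ) + 1) ∣ ((n' : ℤ) + 1) * c i0 := ⟨d i0, h.symm⟩
      have hcoI : IsCoprime ((n : ℤ) + 1) ((n' : ℤ) + 1) := by
        rw [Int.isCoprime_iff_gcd_eq_one]
        have : ((n : ℤ) + 1) = ((n + 1 : ℕ) : ℤ) := by push_cast; ring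
        rw [this]
        have : ((n' : ℤ) + 1) = ((n' + 1 : ℕ) : ℤ) := by push_cast; ring
        rw [this, Int.gcd_natCast_natCast]
        exact hcop
      have hdvd2 : ((n : ℤ) + 1) ∣ c i0 := hcoI.dvd_of_dvd_mul_left hdvd
      have := Int.le_of_dvd hci0 hdvd2
      have := hclt i0 hi0
      omega
    have := hdb i0 hi0
    omega
  have hquot : ((n : ℤ) + 1) * (∑ i ∈ Finset.range k, d i) ≤
      ((n : ℤ) + 1) * ((n' : ℤ) + 1) - 1 := by
    calc ((n : ℤ) + 1) * (∑ i ∈ Finset.range k, d i)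
        = ∑ i ∈ Finset.range k, ((n : ℤ) + 1) * d i := by rw [Finset.mul_sum]
      _ ≤ (∑ i ∈ Finset.range k, ((n' : ℤ) + 1) * c i) - 1 := by
          have h1 : ∑ i ∈ (Finset.range k).erase i0, ((n : ℤ) + 1) * d i ≤
              ∑ i ∈ (Finset.range k).erase i0, ((n' : ℤ) + 1) * c i :=
            Finset.sum_le_sum (fun i hi => hdb i (Finset.mem_of_mem_erase hi))
          rw [← Finset.add_sum_erase _ _ hi0, ← Finset.add_sum_erase _ _ hi0]
          omega
      _ = ((n : ℤ) + 1) * ((n' : ℤ) + 1) - 1 := by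
          rw [← Finset.mul_sum, hS]; ring
  have hfin : (∑ i ∈ Finset.range k, d i) < (n' : ℤ) + 1 := by
    by_contra h
    push_neg at h
    have : ((n : ℤ) + 1) * ((n' : ℤ) + 1) ≤ ((n : ℤ) + 1) * (∑ i ∈ Finset.range k, d i) := by
      apply mul_le_mul_of_nonneg_left h
      omega
    omega
  have hnorm : (∑ i ∈ Finset.range k, d i) < (n' : ℤ) + 1 := hfin
  exact_mod_cast Int.lt_add_one_iff.mp hnorm

/-- Builder: given a good `n`, construct the extended sequence. -/
lemma stmt8_build (k n : ℕ) (hn : 0 < n) (x : ℕ → ℝ) (hx : ∀ i, 0 ≤ x i)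
    (hgood : (∑ i ∈ Finset.range k, ((n : ℤ) * ⌊x i⌋ + ⌊((n : ℝ) + 1) * Int.fract (x i)⌋)) ≤ n) :
    ∃ x' : ℕ → ℝ, (∀ i, 0 ≤ x' i) ∧ (∑ i ∈ Finset.range (k + 1), x' i) = 1 ∧
      ∀ i < k, (n : ℝ) * x' i ≥ (n : ℝ) * (⌊x i⌋ : ℝ) + (⌊((n : ℝ) + 1) * Int.fract (x i)⌋ : ℝ) := by
  set c : ℕ → ℤ := fun i => (n : ℤ) * ⌊x i⌋ + ⌊((n : ℝ) + 1) * Int.fract (x i)⌋ with hc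
  have hc0 : ∀ i, 0 ≤ c i := by
    intro i
    have h1 : 0 ≤ ⌊x i⌋ := Int.floor_nonneg.mpr (hx i)
    have h2 : 0 ≤ ⌊((n : ℝ) + 1) * Int.fract (x i)⌋ := by
      apply Int.floor_nonneg.mpr
      have := Int.fract_nonneg (x i)
      positivity
    have : (0 : ℤ) ≤ (n : ℤ) * ⌊x i⌋ := by positivity
    simp only [hc]; omega
  have hnR : (0 : ℝ) < n := by exact_mod_cast hn
  set S : ℝ := ∑ j ∈ Finset.range k, (c j : ℝ) / n with hSdef
  have hS1 : S ≤ 1 := by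
    rw [hSdef, ← Finset.sum_div]
    rw [div_le_one hnR]
    have : ((∑ j ∈ Finset.range k, c j : ℤ) : ℝ) ≤ (n : ℝ) := by exact_mod_cast hgood
    push_cast at this ⊢
    linarith
  refine ⟨fun i => if i < k then (c i : ℝ) / n else if i = k then 1 - S else 0, ?_, ?_, ?_⟩
  · intro i
    by_cases h1 : i < k
    · simp only [h1, if_true]
      apply div_nonneg _ hnR.le
      exact_mod_cast hc0 i
    · by_cases h2 : i = k
      · show (0 : ℝ) ≤ if i < k then (c i : ℝ) / n else if i = k then 1 - S else 0
        rw [if_neg h1, if_pos h2]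
        linarith
      · simp [h1, h2]
  · rw [Finset.sum_range_succ]
    have h1 : ∑ i ∈ Finset.range k, (if i < k then (c i : ℝ) / n else if i = k then 1 - S else 0)
        = S := by
      apply Finset.sum_congr rfl
      intro i hi
      simp [Finset.mem_range.mp hi]
    rw [h1]
    simp [lt_irrefl]
  · intro i hi
    simp only [hi, if_true]
    rw [mul_div_cancel₀ _ hnR.ne']
    simp only [hc]
    push_cast
    linarith

theorem stmt8 (l : ℕ) (hl : 0 < l) :
    ∃ N : Finset ℕ, (∀ n ∈ N, 0 < n ∧ l ∣ n) ∧
      ∀ (k : ℕ), 0 < k → ∀ (a b : ℕ → ℝ),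
        (∀ i, 0 ≤ a i) → (∀ i, 0 ≤ b i) →
        (∑ i ∈ Finset.range k, a i) ≤ 1 → (∑ i ∈ Finset.range k, b i) ≤ 1 →
        ∃ n ∈ N, ∃ k' : ℕ, k ≤ k' ∧ ∃ a' b' : ℕ → ℝ,
          (∀ i, 0 ≤ a' i) ∧ (∀ i, 0 ≤ b' i) ∧
          (∑ i ∈ Finset.range k', a' i) = 1 ∧ (∑ i ∈ Finset.range k', b' i) = 1 ∧
          (∀ i < k,
            (n : ℝ) * a' i ≥ (n : ℝ) * (⌊a i⌋ : ℝ) + (⌊((n : ℝ) + 1) * Int.fract (a i)⌋ : ℝ) ∧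
            (n : ℝ) * b' i ≥ (n : ℝ) * (⌊b i⌋ : ℝ) + (⌊((n : ℝ) + 1) * Int.fract (b i)⌋ : ℝ)) := by
  have hp1 : 0 < l := hl
  have hp2 : 0 < (l * (l + 1)) := by positivity
  have hp3 : 0 < (l * (l + 1) * (l * (l + 1) + 1)) := by positivity
  have hcop12 : Nat.Coprime (l + 1) ((l * (l + 1)) + 1) := by
    have h := (Nat.coprime_add_mul_left_right (l + 1) 1 l).mpr (Nat.coprime_one_right _)
    have he : 1 + (l + 1) * l = (l * (l + 1)) + 1 := by ring
    rwa [he] at h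
  have hcop13 : Nat.Coprime (l + 1) ((l * (l + 1) * (l * (l + 1) + 1)) + 1) := by
    have h := (Nat.coprime_add_mul_left_right (l + 1) 1 ((l * (l + 1) + 1) * l)).mpr
      (Nat.coprime_one_right _)
    have he : 1 + (l + 1) * ((l * (l + 1) + 1) * l) = (l * (l + 1) * (l * (l + 1) + 1)) + 1 := by ring
    rwa [he] at h
  have hcop23 : Nat.Coprime ((l * (l + 1)) + 1) ((l * (l + 1) * (l * (l + 1) + 1)) + 1) := by
    have h := (Nat.coprime_add_mul_left_right (l * (l + 1) + 1) 1 ((l + 1) * l)).mpr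
      (Nat.coprime_one_right _)
    have he : 1 + (l * (l + 1) + 1) * ((l + 1) * l) = (l * (l + 1) * (l * (l + 1) + 1)) + 1 := by ring
    rwa [he] at h
  refine ⟨{l, (l * (l + 1)), (l * (l + 1) * (l * (l + 1) + 1))}, ?_, ?_⟩
  · intro n hn
    simp only [Finset.mem_insert, Finset.mem_singleton] at hn
    rcases hn with rfl | rfl | rfl
    · exact ⟨hp1, dvd_refl _⟩
    · exact ⟨hp2, dvd_mul_right _ _⟩
    · exact ⟨hp3, dvd_mul_of_dvd_left (dvd_mul_right _ _) _⟩
  · intro k hk a b ha hb hsa hsb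
    set P : ℕ → (ℕ → ℝ) → Prop := fun n x =>
      (∑ i ∈ Finset.range k, ((n : ℤ) * ⌊x i⌋ + ⌊((n : ℝ) + 1) * Int.fract (x i)⌋)) ≤ n
      with hP
    -- select n good for both
    have hsel : ∃ n ∈ ({l, (l * (l + 1)), (l * (l + 1) * (l * (l + 1) + 1))} : Finset ℕ), 0 < n ∧ P n a ∧ P n b := by
      by_cases ha1 : P l a <;> by_cases hb1 : P l b
      · exact ⟨l, by simp, hp1, ha1, hb1⟩
      · -- b fails l, so b is good at (l * (l + 1)) and (l * (l + 1) * (l * (l + 1) + 1))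
        have hb2 : P (l * (l + 1)) b := stmt8_key k b hb hsb l (l * (l + 1)) hcop12 hb1
        have hb3 : P (l * (l + 1) * (l * (l + 1) + 1)) b := stmt8_key k b hb hsb l (l * (l + 1) * (l * (l + 1) + 1)) hcop13 hb1
        by_cases ha2 : P (l * (l + 1)) a
        · exact ⟨(l * (l + 1)), by simp, hp2, ha2, hb2⟩
        · have ha3 : P (l * (l + 1) * (l * (l + 1) + 1)) a := stmt8_key k a ha hsa (l * (l + 1)) (l * (l + 1) * (l * (l + 1) + 1)) hcop23 ha2
          exact ⟨(l * (l + 1) * (l * (l + 1) + 1)), by simp, hp3, ha3, hb3⟩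
      · have ha2 : P (l * (l + 1)) a := stmt8_key k a ha hsa l (l * (l + 1)) hcop12 ha1
        have ha3 : P (l * (l + 1) * (l * (l + 1) + 1)) a := stmt8_key k a ha hsa l (l * (l + 1) * (l * (l + 1) + 1)) hcop13 ha1
        by_cases hb2 : P (l * (l + 1)) b
        · exact ⟨(l * (l + 1)), by simp, hp2, ha2, hb2⟩
        · have hb3 : P (l * (l + 1) * (l * (l + 1) + 1)) b := stmt8_key k b hb hsb (l * (l + 1)) (l * (l + 1) * (l * (l + 1) + 1)) hcop23 hb2
          exact ⟨(l * (l + 1) * (l * (l + 1) + 1)), by simp, hp3, ha3, hb3⟩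
      · have ha2 : P (l * (l + 1)) a := stmt8_key k a ha hsa l (l * (l + 1)) hcop12 ha1
        have hb2 : P (l * (l + 1)) b := stmt8_key k b hb hsb l (l * (l + 1)) hcop12 hb1
        exact ⟨(l * (l + 1)), by simp, hp2, ha2, hb2⟩
    obtain ⟨n, hnmem, hnpos, hPa, hPb⟩ := hsel
    obtain ⟨a', ha'0, ha'1, ha'2⟩ := stmt8_build k n hnpos a ha hPa
    obtain ⟨b', hb'0, hb'1, hb'2⟩ := stmt8_build k n hnpos b hb hPb
    exact ⟨n, hnmem, k + 1, Nat.le_succ k, a', b', ha'0, hb'0, ha'1, hb'1,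
      fun i hi => ⟨ha'2 i hi, hb'2 i hi⟩⟩
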